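/- In the lower-bound construction, for the probability vector p(k) = (1 − 1/(2(1−kε)), 1/(2(1−kε))) and cost c(k) = (1/2)(kε/(1−kε) − Σ_{j=0}^{k−1} ε/(1−jε)), the agent facing linear contract α chooses action a(k) (over all a(k'), k' in {0,...,⌊1/(2ε)⌋−1}) if and only if kε ≤ α < (k+1)ε (or kε ≤ α for the largest k). -/
import Mathlib


/-- In the lower-bound construction with
p(k) = (1 − 1/(2(1−kε)), 1/(2(1−kε))) and
c(k) = (1/2)(kε/(1−kε) − ∑_{j<k} ε/(1−jε)), the agent facing linear contract α
(payoff g k α = α/(2(1−kε)) − c(k), ties broken toward larger index) chooses action a(k)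
iff kε ≤ α < (k+1)ε (or kε ≤ α for the largest k < ⌊1/(2ε)⌋). -/
theorem lower_bound_best_response_intervals
    (ε : ℝ) (hε0 : 0 < ε) (hε : ε < 0.1)
    (K : ℕ) (hK : K = Nat.floor (1 / (2 * ε)))
    (cost : ℕ → ℝ)
    (hcost : ∀ k : ℕ, cost k =
      (1/2) * (((k : ℝ) * ε) / (1 - (k : ℝ) * ε) -
        ∑ j ∈ Finset.range k, ε / (1 - (j : ℝ) * ε)))
    (g : ℕ → ℝ → ℝ)
    (hg : ∀ (k : ℕ) (α : ℝ), g k α = α / (2 * (1 - (k : ℝ) * ε)) - cost k)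
    (astar : ℝ → ℕ)
    (hastar_lt : ∀ α : ℝ, astar α < K)
    (hastar_max : ∀ α : ℝ, ∀ k' < K, g k' α ≤ g (astar α) α)
    (hastar_tie : ∀ α : ℝ, ∀ k' < K, g k' α = g (astar α) α → k' ≤ astar α) :
    ∀ α ∈ Set.Icc (0:ℝ) 1, ∀ k < K,
      (astar α = k ↔
        ((k : ℝ) * ε ≤ α ∧ (k + 1 < K → α < ((k : ℝ) + 1) * ε))) := by
  have hKle : (K : ℝ) * ε ≤ 1 / 2 := by
    have h1 : (K : ℝ) ≤ 1 / (2 * ε) := by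
      rw [hK]; exact Nat.floor_le (by positivity)
    nlinarith [(le_div_iff₀ (by positivity : (0:ℝ) < 2 * ε)).mp h1]
  have hlt1 : ∀ j : ℕ, j ≤ K → (j : ℝ) * ε < 1 := by
    intro j hj
    have hjK : (j : ℝ) ≤ K := by exact_mod_cast hj
    nlinarith
  have hdiff : ∀ (j : ℕ) (α : ℝ), ((j : ℝ) + 1) * ε < 1 →
      g (j+1) α - g j α =
        ε * (α - ((j : ℝ) + 1) * ε) /
          (2 * (1 - ((j : ℝ) + 1) * ε) * (1 - (j : ℝ) * ε)) := by
    intro j α hj1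
    have hj0 : (0:ℝ) ≤ (j:ℝ) := Nat.cast_nonneg j
    have hjlt : (j : ℝ) * ε < 1 := by nlinarith
    have h1 : 1 - ((j : ℝ) + 1) * ε ≠ 0 := by linarith
    have h2 : 1 - (j : ℝ) * ε ≠ 0 := by linarith
    rw [hg, hg, hcost, hcost, Finset.sum_range_succ]
    push_cast
    field_simp
    ring
  intro α hα k hkK
  obtain ⟨hα0, hα1⟩ := hα
  -- upward monotonicity
  have hmono_up : ∀ b : ℕ, b ≤ K → (b : ℝ) * ε ≤ α → ∀ j ≤ b, g j α ≤ g b α := by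
    intro b
    induction b with
    | zero => intro _ _ j hj; interval_cases j; exact le_rfl
    | succ n ih =>
      intro hnK hαn j hj
      have hn1 : ((n : ℝ) + 1) * ε < 1 := by
        have := hlt1 (n+1) hnK; push_cast at this; linarith
      have hn0 : (0:ℝ) ≤ (n:ℝ) := Nat.cast_nonneg n
      have hαn' : ((n : ℝ) + 1) * ε ≤ α := by push_cast at hαn; linarith
      have hstep : g n α ≤ g (n+1) α := by
        have hd := hdiff n α hn1
        have hnum : 0 ≤ ε * (α - ((n : ℝ) + 1) * ε) := by nlinarith
        have hden : 0 < 2 * (1 - ((n : ℝ) + 1) * ε) * (1 - (n : ℝ) * ε) := by nlinarith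
        have h0 : 0 ≤ g (n+1) α - g n α := hd ▸ div_nonneg hnum hden.le
        linarith
      rcases Nat.lt_or_ge j (n+1) with h | h
      · have hj' : j ≤ n := Nat.lt_succ_iff.mp h
        have : (n : ℝ) * ε ≤ α := by nlinarith
        exact le_trans (ih (Nat.le_of_succ_le hnK) this j hj') hstep
      · have : j = n + 1 := le_antisymm hj h
        rw [this]
  -- downward strict monotonicity
  have hmono_down : ∀ m : ℕ, ∀ a : ℕ, a < m → m ≤ K → α < ((a : ℝ) + 1) * ε →
      g m α < g a α := by
    intro m
    induction m with
    | zero => intro a h; omega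
    | succ n ih =>
      intro a hkn hnK hαk
      have hn1 : ((n : ℝ) + 1) * ε < 1 := by
        have := hlt1 (n+1) hnK; push_cast at this; linarith
      have hn0 : (0:ℝ) ≤ (n:ℝ) := Nat.cast_nonneg n
      have han : (a : ℝ) ≤ (n : ℝ) := by exact_mod_cast Nat.lt_succ_iff.mp hkn
      have hαn : α < ((n : ℝ) + 1) * ε := by nlinarith
      have hstep : g (n+1) α < g n α := by
        have hd := hdiff n α hn1
        have hnum : ε * (α - ((n : ℝ) + 1) * ε) < 0 := by nlinarith
        have hden : 0 < 2 * (1 - ((n : ℝ) + 1) * ε) * (1 - (n : ℝ) * ε) := by nlinarith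
        have h0 : g (n+1) α - g n α < 0 := hd ▸ div_neg_of_neg_of_pos hnum hden
        linarith
      rcases Nat.lt_or_ge a n with h | h
      · exact lt_trans hstep (ih a h (Nat.le_of_succ_le hnK) hαk)
      · have : a = n := le_antisymm (Nat.lt_succ_iff.mp hkn) h
        rw [this]; exact hstep
  constructor
  · intro hk
    constructor
    · -- kε ≤ α
      by_contra hlt
      push_neg at hlt
      rcases Nat.eq_zero_or_pos k with rfl | hkpos
      · simp at hlt; nlinarith
      · obtain ⟨m, rfl⟩ : ∃ m, k = m + 1 := ⟨k - 1, by omega⟩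
        have hαm : α < ((m : ℝ) + 1) * ε := by push_cast at hlt; linarith
        have hd : g (m+1) α < g m α := hmono_down (m+1) m (by omega) hkK.le hαm
        have := hastar_max α m (by omega)
        rw [hk] at this
        linarith
    · -- α < (k+1)ε when k+1 < K
      intro hk1K
      by_contra hge
      push_neg at hge
      have hup : g k α ≤ g (k+1) α := by
        have := hmono_up (k+1) hk1K.le (by push_cast; linarith) k (by omega)
        exact this
      have hmax := hastar_max α (k+1) hk1K
      rw [hk] at hmax
      have heq : g (k+1) α = g (astar α) α := by rw [hk]; linarith
      have := hastar_tie α (k+1) hk1K heq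
      omega
  · rintro ⟨hαk, hαk1⟩
    set m := astar α with hm
    rcases lt_trichotomy m k with h | h | h
    · exfalso
      have hup : g m α ≤ g k α := hmono_up k hkK.le hαk m h.le
      have hmax := hastar_max α k hkK
      have heq : g k α = g (astar α) α := le_antisymm hmax (by rw [← hm]; exact hup)
      have := hastar_tie α k hkK heq
      omega
    · omega
    · exfalso
      have hk1K : k + 1 < K := by have := hastar_lt α; omega
      have hdn : g m α < g k α := hmono_down m k h (hastar_lt α).le (hαk1 hk1K)
      have hmax := hastar_max α k hkK
      rw [← hm] at hmax
      linarith
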